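/- Let n ≥ 1 and let f : ℝⁿ → ℝ be continuously differentiable with gradient g. Fix s ∈ (0,1], ρ ∈ (0,1), σ ∈ (0,1/2), an integer N ≥ 1, and weights η_k ∈ [0,1). Let x_{k+1} = x_k + α_k d_k, where α_k = s ρ^{j_k} and j_k is the smallest j ∈ ℕ with f(x_k + s ρ^j d_k) ≤ T_k + σ s ρ^j ⟨g(x_k), d_k⟩; here f_k = f(x_k), f_{l(k)} = max_{0≤j≤min(k,N)} f_{k−j}, T̄_0 = f_0, T̄_k = (1−η_{k−1}) f_k + η_{k−1} T̄_{k−1} for 1 ≤ k ≤ N−1, T̄_k = Σ_{j=0}^{N−1}(η_{k−1}⋯η_{k−j})(1−η_{k−j−1}) f_{k−j} + (η_{k−1}⋯η_{k−N}) f_{k−N} for k ≥ N, and T_k = f_{l(k)} for k ≤ N−1, T_k = max{T̄_k, f_k} for k ≥ N. Assume (H1) the level set L(x_0) = {x ∈ ℝⁿ : f(x) ≤ f(x_0)} is bounded; (H2) there exist an open convex set C ⊇ L(x_0) and L > 0 with ‖g(x) − g(y)‖ ≤ L‖x − y‖ for all x, y ∈ C; and (H3) there exist 0 < c₁ < 1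 < c₂ with ⟨g(x_k), d_k⟩ ≤ −c₁‖g(x_k)‖² and ‖d_k‖ ≤ c₂‖g(x_k)‖ for all k. Then every cluster point x* of the sequence {x_k} is a first-order stationary point of f, i.e., g(x*) = 0. -/

import Mathlib

private lemma seg_norm_le' {E : Type*} [NormedAddCommGroup E] [NormedSpace ℝ E]
    {a b z : E} (hz : z ∈ segment ℝ a b) : ‖z - a‖ ≤ ‖b - a‖ := by
  rw [segment_eq_image'] at hz
  obtain ⟨t, ht, rfl⟩ := hz
  rw [add_sub_cancel_left, norm_smul, Real.norm_eq_abs, abs_of_nonneg ht.1]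
  nlinarith [norm_nonneg (b - a), ht.2]

private lemma descent_lemma' {n : ℕ} {f : EuclideanSpace ℝ (Fin n) → ℝ}
    {g : EuclideanSpace ℝ (Fin n) → EuclideanSpace ℝ (Fin n)}
    (hg : ∀ y, HasGradientAt f (g y) y) {C : Set (EuclideanSpace ℝ (Fin n))}
    {L : ℝ} (hL : 0 ≤ L) (hLip : ∀ a ∈ C, ∀ b ∈ C, ‖g a - g b‖ ≤ L * ‖a - b‖)
    {a b : EuclideanSpace ℝ (Fin n)} (hseg : segment ℝ a b ⊆ C) :
    f b ≤ f a + (inner ℝ (g a) (b - a) : ℝ) + L * ‖b - a‖ ^ 2 := by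
  have key := (convex_segment a b).norm_image_sub_le_of_norm_hasFDerivWithin_le'
    (f' := fun z => (InnerProductSpace.toDual ℝ _ (g z) : _ →L[ℝ] ℝ))
    (φ := (InnerProductSpace.toDual ℝ _ (g a) : _ →L[ℝ] ℝ)) (C := L * ‖b - a‖)
    (f := f)
    (fun z _ => ((hg z).hasFDerivAt).hasFDerivWithinAt)
    (fun z hz => by
      rw [← map_sub, (InnerProductSpace.toDual ℝ _).norm_map]
      exact le_trans (hLip z (hseg hz) a (hseg (left_mem_segment ℝ a b)))
        (mul_le_mul_of_nonneg_left (seg_norm_le' hz) hL))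
    (left_mem_segment ℝ a b) (right_mem_segment ℝ a b)
  rw [InnerProductSpace.toDual_apply_apply, Real.norm_eq_abs] at key
  have h2 := (abs_le.mp key).2
  nlinarith [h2]

set_option maxHeartbeats 1000000 in
/-- Stationarity consequence of Theorem 1: every cluster point of the sequence
generated by the nonmonotone Armijo-type line search is a first-order
stationary point of `f`. -/
theorem nmls_cluster_points_stationary (n : ℕ) (hn : 1 ≤ n)
    (f : EuclideanSpace ℝ (Fin n) → ℝ)
    (g : EuclideanSpace ℝ (Fin n) → EuclideanSpace ℝ (Fin n))
    (hf : ContDiff ℝ 1 f) (hg : ∀ y, HasGradientAt f (g y) y)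
    (s ρ σ : ℝ) (hs : s ∈ Set.Ioc (0 : ℝ) 1) (hρ : ρ ∈ Set.Ioo (0 : ℝ) 1)
    (hσ : σ ∈ Set.Ioo (0 : ℝ) (1 / 2))
    (N : ℕ) (hN : 1 ≤ N) (η : ℕ → ℝ) (hη : ∀ k, η k ∈ Set.Ico (0 : ℝ) 1)
    (x d : ℕ → EuclideanSpace ℝ (Fin n)) (α : ℕ → ℝ) (jk : ℕ → ℕ)
    (Tbar T fl : ℕ → ℝ)
    (hfl : ∀ k, fl k = (Finset.range (min k N + 1)).sup'
      Finset.nonempty_range_add_one (fun j => f (x (k - j))))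
    (hT0 : Tbar 0 = f (x 0))
    (hTrec : ∀ k, 1 ≤ k → k ≤ N - 1 →
      Tbar k = (1 - η (k - 1)) * f (x k) + η (k - 1) * Tbar (k - 1))
    (hTsum : ∀ k, N ≤ k → Tbar k =
      (∑ j ∈ Finset.range N,
          (∏ i ∈ Finset.range j, η (k - 1 - i)) * (1 - η (k - j - 1)) * f (x (k - j)))
        + (∏ i ∈ Finset.range N, η (k - 1 - i)) * f (x (k - N)))
    (hTlt : ∀ k, k ≤ N - 1 → T k = fl k)
    (hTge : ∀ k, N ≤ k → T k = max (Tbar k) (f (x k)))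
    (hjk : ∀ k, IsLeast {j : ℕ | f (x k + (s * ρ ^ j) • d k) ≤
      T k + σ * (s * ρ ^ j) * (inner ℝ (g (x k)) (d k) : ℝ)} (jk k))
    (hα : ∀ k, α k = s * ρ ^ (jk k))
    (hx : ∀ k, x (k + 1) = x k + α k • d k)
    (H1 : Bornology.IsBounded {y : EuclideanSpace ℝ (Fin n) | f y ≤ f (x 0)})
    (H2 : ∃ C : Set (EuclideanSpace ℝ (Fin n)), IsOpen C ∧ Convex ℝ C ∧
      {y : EuclideanSpace ℝ (Fin n) | f y ≤ f (x 0)} ⊆ C ∧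
      ∃ L > (0 : ℝ), ∀ a ∈ C, ∀ b ∈ C, ‖g a - g b‖ ≤ L * ‖a - b‖)
    (H3 : ∃ c₁ c₂ : ℝ, 0 < c₁ ∧ c₁ < 1 ∧ 1 < c₂ ∧
      ∀ k, (inner ℝ (g (x k)) (d k) : ℝ) ≤ -c₁ * ‖g (x k)‖ ^ 2 ∧
        ‖d k‖ ≤ c₂ * ‖g (x k)‖) :
    ∀ xstar : EuclideanSpace ℝ (Fin n),
      MapClusterPt xstar Filter.atTop x → g xstar = 0 := by
  obtain ⟨hs0, hs1⟩ := hs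
  obtain ⟨hρ0, hρ1⟩ := hρ
  obtain ⟨hσ0, hσ1⟩ := hσ
  obtain ⟨C, hCopen, hCconv, hSC, L, hL0, hLip⟩ := H2
  obtain ⟨c₁, c₂, hc₁0, hc₁1, hc₂1, hc⟩ := H3
  set S : Set (EuclideanSpace ℝ (Fin n)) := {y | f y ≤ f (x 0)} with hSdef
  -- basic facts about the inner product direction
  have hgd : ∀ k, (inner ℝ (g (x k)) (d k) : ℝ) ≤ -c₁ * ‖g (x k)‖ ^ 2 := fun k => (hc k).1
  have hdk : ∀ k, ‖d k‖ ≤ c₂ * ‖g (x k)‖ := fun k => (hc k).2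
  have hid : ∀ k, (inner ℝ (g (x k)) (d k) : ℝ) ≤ 0 := by
    intro k
    have := hgd k
    nlinarith [sq_nonneg ‖g (x k)‖]
  have hα_pos : ∀ k, 0 < α k := by intro k; rw [hα]; positivity
  have hα_le_s : ∀ k, α k ≤ s := by
    intro k; rw [hα]
    have : ρ ^ (jk k) ≤ 1 := pow_le_one₀ hρ0.le hρ1.le
    nlinarith
  have armijo : ∀ k, f (x (k + 1)) ≤ T k + σ * α k * (inner ℝ (g (x k)) (d k) : ℝ) := by
    intro k
    have h1 := (hjk k).1
    rw [hx k, hα k]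
    exact h1
  have hfk_le_fl : ∀ k, f (x k) ≤ fl k := by
    intro k
    rw [hfl]
    have h0 : (0 : ℕ) ∈ Finset.range (min k N + 1) := Finset.mem_range.2 (by omega)
    exact Finset.le_sup' (fun j => f (x (k - j))) h0
  have hT_ge : ∀ k, f (x k) ≤ T k := by
    intro k
    by_cases hk : N ≤ k
    · rw [hTge k hk]; exact le_max_right _ _
    · rw [hTlt k (by omega)]; exact hfk_le_fl k
  have hT_le_fl : ∀ k, T k ≤ fl k := by
    intro k
    by_cases hk : N ≤ k
    · rw [hTge k hk]
      refine max_le ?_ (hfk_le_fl k)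
      rw [hTsum k hk]
      have hterm : ∀ j, j ≤ N → f (x (k - j)) ≤ fl k := by
        intro j hj
        rw [hfl k]
        exact Finset.le_sup' (fun j => f (x (k - j))) (Finset.mem_range.2 (by omega))
      have hcoef : ∀ j, (∏ i ∈ Finset.range j, η (k - 1 - i)) * (1 - η (k - j - 1)) =
          (∏ i ∈ Finset.range j, η (k - 1 - i)) - ∏ i ∈ Finset.range (j + 1), η (k - 1 - i) := by
        intro j
        rw [Finset.prod_range_succ, show k - j - 1 = k - 1 - j from by omega]
        ring
      have hP0 : ∀ j, (0:ℝ) ≤ ∏ i ∈ Finset.range j, η (k - 1 - i) :=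
        fun j => Finset.prod_nonneg fun i _ => (hη _).1
      have hcoef0 : ∀ j, (0:ℝ) ≤ (∏ i ∈ Finset.range j, η (k - 1 - i))
          - ∏ i ∈ Finset.range (j + 1), η (k - 1 - i) := by
        intro j
        rw [← hcoef j]
        have h1 := (hη (k - j - 1)).2
        have h2 := hP0 j
        nlinarith
      calc (∑ j ∈ Finset.range N,
              (∏ i ∈ Finset.range j, η (k - 1 - i)) * (1 - η (k - j - 1)) * f (x (k - j)))
            + (∏ i ∈ Finset.range N, η (k - 1 - i)) * f (x (k - N))
          ≤ (∑ j ∈ Finset.range N,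
              ((∏ i ∈ Finset.range j, η (k - 1 - i))
                - ∏ i ∈ Finset.range (j + 1), η (k - 1 - i)) * fl k)
            + (∏ i ∈ Finset.range N, η (k - 1 - i)) * fl k := by
            refine add_le_add (Finset.sum_le_sum fun j hj => ?_)
              (mul_le_mul_of_nonneg_left (hterm N le_rfl) (hP0 N))
            rw [mul_assoc, ← hcoef j, mul_assoc]
            refine mul_le_mul_of_nonneg_left ?_ (hP0 j)
            have h1 := (hη (k - j - 1)).2
            have h2 := hterm j (Finset.mem_range.1 hj).le
            nlinarith
        _ = fl k := by
            rw [← Finset.sum_mul,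
              Finset.sum_range_sub' (fun j => ∏ i ∈ Finset.range j, η (k - 1 - i)) N]
            simp
            ring
    · rw [hTlt k (by omega)]
  have harm2 : ∀ k, f (x (k + 1)) ≤ T k := by
    intro k
    have h1 := armijo k
    have h2 : σ * α k * (inner ℝ (g (x k)) (d k) : ℝ) ≤ 0 :=
      mul_nonpos_of_nonneg_of_nonpos (mul_nonneg hσ0.le (hα_pos k).le) (hid k)
    linarith
  have hfl_mono : ∀ k, fl (k + 1) ≤ fl k := by
    intro k
    rw [hfl (k + 1)]
    refine Finset.sup'_le _ _ fun j hj => ?_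
    rw [Finset.mem_range] at hj
    rcases Nat.eq_zero_or_pos j with h0 | hpos
    · subst h0
      simpa using (harm2 k).trans (hT_le_fl k)
    · have hidx : k + 1 - j = k - (j - 1) := by omega
      rw [hidx, hfl k]
      exact Finset.le_sup' (fun j => f (x (k - j))) (Finset.mem_range.2 (by omega))
  have hant : Antitone fl := antitone_nat_of_succ_le hfl_mono
  have hfl0 : fl 0 = f (x 0) := by
    rw [hfl]
    simp [Nat.zero_sub]
  have hmemS : ∀ k, x k ∈ S := by
    intro k
    have := (hfk_le_fl k).trans ((hant (Nat.zero_le k)).trans_eq hfl0)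
    exact this
  -- compactness of the level set and consequences
  have hSclosed : IsClosed S := isClosed_le hf.continuous continuous_const
  have hScompact : IsCompact S := Metric.isCompact_of_isClosed_isBounded hSclosed H1
  obtain ⟨ε, hε0, hεsub⟩ := hScompact.exists_thickening_subset_open hCopen hSC
  obtain ⟨R, hR⟩ := H1.subset_closedBall (x 0)
  set G : ℝ := ‖g (x 0)‖ + L * max R 0 with hGdef
  have hG : ∀ a ∈ S, ‖g a‖ ≤ G := by
    intro a ha
    have h1 : ‖g a - g (x 0)‖ ≤ L * ‖a - x 0‖ := hLip a (hSC ha) (x 0) (hSC (hmemS 0))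
    have h2 : ‖a - x 0‖ ≤ max R 0 := by
      have := hR ha
      rw [Metric.mem_closedBall, dist_eq_norm] at this
      exact this.trans (le_max_left _ _)
    have h3 : ‖g a‖ - ‖g (x 0)‖ ≤ ‖g a - g (x 0)‖ := norm_sub_norm_le _ _
    nlinarith
  have hG0 : 0 ≤ G := le_trans (norm_nonneg _) (hG (x 0) (hmemS 0))
  set G' : ℝ := G + 1 with hG'def
  have hG'0 : 0 < G' := by positivity
  -- uniform lower bound on the step size (when the gradient is nonzero)
  set βb : ℝ := min ((1 - σ) * c₁ / (L * c₂ ^ 2)) (ε / (c₂ * G')) with hβbdef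
  have hβb0 : 0 < βb := by
    have h1 : (0:ℝ) < (1 - σ) * c₁ / (L * c₂ ^ 2) := by
      apply div_pos (by nlinarith) (by positivity)
    have h2 : (0:ℝ) < ε / (c₂ * G') := by
      apply div_pos hε0 (by positivity)
    exact lt_min h1 h2
  set αb : ℝ := min s (ρ * βb) with hαbdef
  have hαb0 : 0 < αb := lt_min hs0 (by positivity)
  have stepb : ∀ k, g (x k) ≠ 0 → αb ≤ α k := by
    intro k hk0
    by_contra hlt
    push_neg at hlt
    have hjk1 : 1 ≤ jk k := by
      by_contra h
      push_neg at h
      have hj0 : jk k = 0 := by omega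
      have : α k = s := by rw [hα, hj0, pow_zero, mul_one]
      have := min_le_left s (ρ * βb)
      rw [hαbdef] at hlt
      linarith [hlt.trans_le this]
    obtain ⟨m, hm⟩ : ∃ m, jk k = m + 1 := ⟨jk k - 1, by omega⟩
    set β : ℝ := s * ρ ^ m with hβdef
    have hβpos : 0 < β := by positivity
    have hαβ : α k = β * ρ := by
      rw [hα, hβdef, hm, pow_succ]
      ring
    have hββ : β < βb := by
      have h1 : β * ρ < ρ * βb := by
        rw [← hαβ]
        exact hlt.trans_le (min_le_right _ _)
      nlinarith
    have hfail : ¬ (f (x k + (s * ρ ^ m) • d k) ≤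
        T k + σ * (s * ρ ^ m) * (inner ℝ (g (x k)) (d k) : ℝ)) := by
      intro hmem
      have := (hjk k).2 hmem
      omega
    push_neg at hfail
    have hgpos : 0 < ‖g (x k)‖ := norm_pos_iff.2 hk0
    have hgG : ‖g (x k)‖ ≤ G := hG _ (hmemS k)
    -- the trial segment stays in C
    have hseg : segment ℝ (x k) (x k + β • d k) ⊆ C := by
      intro z hz
      apply hεsub
      rw [Metric.mem_thickening_iff]
      refine ⟨x k, hmemS k, ?_⟩
      have h1 : ‖z - x k‖ ≤ ‖(x k + β • d k) - x k‖ := seg_norm_le' hz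
      rw [add_sub_cancel_left, norm_smul, Real.norm_eq_abs, abs_of_pos hβpos] at h1
      have hgG' : ‖g (x k)‖ ≤ G' := by rw [hG'def]; linarith
      have h2 : β * ‖d k‖ ≤ β * (c₂ * G') :=
        mul_le_mul_of_nonneg_left ((hdk k).trans
          (mul_le_mul_of_nonneg_left hgG' (by linarith : (0:ℝ) ≤ c₂))) hβpos.le
      have h3 : β * (c₂ * G') < βb * (c₂ * G') :=
        mul_lt_mul_of_pos_right hββ (by positivity)
      have h4 : βb * (c₂ * G') ≤ ε := by
        have h5 : βb ≤ ε / (c₂ * G') := min_le_right _ _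
        have : (0:ℝ) < c₂ * G' := by positivity
        rw [le_div_iff₀ this] at h5
        exact h5
      rw [dist_eq_norm]
      linarith
    have hdesc := descent_lemma' hg hL0.le hLip hseg
    rw [add_sub_cancel_left] at hdesc
    rw [real_inner_smul_right] at hdesc
    have hnsm : ‖β • d k‖ ^ 2 = β ^ 2 * ‖d k‖ ^ 2 := by
      rw [norm_smul, Real.norm_eq_abs, mul_pow, sq_abs]
    rw [hnsm] at hdesc
    set ip : ℝ := (inner ℝ (g (x k)) (d k) : ℝ) with hipdef
    have hfk : f (x k) ≤ T k := hT_ge k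
    have hfail' : T k + σ * β * ip < f (x k + β • d k) := by
      rw [hipdef, hβdef]
      exact hfail
    have e1 : 0 < (1 - σ) * (β * ip) + L * (β ^ 2 * ‖d k‖ ^ 2) := by nlinarith [hdesc, hfail', hfk]
    have e2 : (1 - σ) * β * (c₁ * ‖g (x k)‖ ^ 2) < L * β ^ 2 * (c₂ ^ 2 * ‖g (x k)‖ ^ 2) := by
      have hip1 : ip ≤ -c₁ * ‖g (x k)‖ ^ 2 := hgd k
      have hd2 : ‖d k‖ ^ 2 ≤ c₂ ^ 2 * ‖g (x k)‖ ^ 2 := by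
        have h := hdk k
        nlinarith [norm_nonneg (d k), norm_nonneg (g (x k))]
      have hσ' : 0 < 1 - σ := by linarith
      have t1 : (1 - σ) * β * ip ≤ (1 - σ) * β * (-c₁ * ‖g (x k)‖ ^ 2) :=
        mul_le_mul_of_nonneg_left hip1 (mul_nonneg hσ'.le hβpos.le)
      have t2 : L * β ^ 2 * ‖d k‖ ^ 2 ≤ L * β ^ 2 * (c₂ ^ 2 * ‖g (x k)‖ ^ 2) :=
        mul_le_mul_of_nonneg_left hd2 (by positivity)
      nlinarith [e1, t1, t2]
    have e3 : (1 - σ) * c₁ < L * c₂ ^ 2 * β := by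
      have hpos2 : (0:ℝ) < β * ‖g (x k)‖ ^ 2 := by positivity
      rw [← mul_lt_mul_iff_of_pos_right hpos2]
      nlinarith [e2]
    have e4 : βb ≤ (1 - σ) * c₁ / (L * c₂ ^ 2) := min_le_left _ _
    have e5 : (1 - σ) * c₁ / (L * c₂ ^ 2) < β := by
      rw [div_lt_iff₀ (by positivity)]
      nlinarith [e3]
    linarith
  -- the key decrease estimate
  set cc : ℝ := σ * αb * c₁ with hccdef
  have hcc0 : 0 < cc := by positivity
  have keydec : ∀ k, f (x (k + 1)) ≤ fl k - cc * ‖g (x k)‖ ^ 2 := by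
    intro k
    by_cases h0 : g (x k) = 0
    · have := (harm2 k).trans (hT_le_fl k)
      rw [h0]
      simpa using this
    · have hαk := stepb k h0
      have hip := hgd k
      have h1 : σ * α k * (inner ℝ (g (x k)) (d k) : ℝ) ≤ -(cc * ‖g (x k)‖ ^ 2) := by
        have hipneg : (inner ℝ (g (x k)) (d k) : ℝ) ≤ 0 := hid k
        have h2 : α k * (inner ℝ (g (x k)) (d k) : ℝ) ≤ αb * (inner ℝ (g (x k)) (d k) : ℝ) :=
          mul_le_mul_of_nonpos_right hαk hipneg
        have h3 : αb * (inner ℝ (g (x k)) (d k) : ℝ) ≤ αb * (-c₁ * ‖g (x k)‖ ^ 2) :=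
          mul_le_mul_of_nonneg_left hip hαb0.le
        have h4 : σ * (α k * (inner ℝ (g (x k)) (d k) : ℝ)) ≤ σ * (αb * (-c₁ * ‖g (x k)‖ ^ 2)) :=
          mul_le_mul_of_nonneg_left (h2.trans h3) hσ0.le
        rw [hccdef]
        nlinarith [h4]
      have := armijo k
      have := hT_le_fl k
      linarith
  -- geometric growth of gradient norms
  set q : ℝ := 1 + L * s * c₂ with hqdef
  have hq1 : 1 ≤ q := by
    have : (0:ℝ) < L * s * c₂ := by positivity
    rw [hqdef]
    linarith
  have growth : ∀ k, ‖g (x (k + 1))‖ ≤ q * ‖g (x k)‖ := by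
    intro k
    have h1 : ‖g (x (k + 1)) - g (x k)‖ ≤ L * ‖x (k + 1) - x k‖ :=
      hLip _ (hSC (hmemS _)) _ (hSC (hmemS _))
    have h2 : ‖x (k + 1) - x k‖ = α k * ‖d k‖ := by
      rw [hx, add_sub_cancel_left, norm_smul, Real.norm_eq_abs, abs_of_pos (hα_pos k)]
    have h3 : ‖g (x (k + 1))‖ - ‖g (x k)‖ ≤ ‖g (x (k + 1)) - g (x k)‖ := norm_sub_norm_le _ _
    have h4 : α k * ‖d k‖ ≤ s * (c₂ * ‖g (x k)‖) :=
      mul_le_mul (hα_le_s k) (hdk k) (norm_nonneg _) hs0.le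
    rw [h2] at h1
    have h5 : L * (α k * ‖d k‖) ≤ L * (s * (c₂ * ‖g (x k)‖)) :=
      mul_le_mul_of_nonneg_left h4 hL0.le
    rw [hqdef]
    linarith [h1, h3, h5]
  have pow_growth : ∀ i t, ‖g (x (i + t))‖ ≤ q ^ t * ‖g (x i)‖ := by
    intro i t
    induction t with
    | zero => simp
    | succ t ih =>
      calc ‖g (x (i + t + 1))‖ ≤ q * ‖g (x (i + t))‖ := growth (i + t)
        _ ≤ q * (q ^ t * ‖g (x i)‖) := mul_le_mul_of_nonneg_left ih (by linarith)
        _ = q ^ (t + 1) * ‖g (x i)‖ := by ring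
  have growthN : ∀ i m, i ≤ m → m ≤ i + N → ‖g (x m)‖ ≤ q ^ N * ‖g (x i)‖ := by
    intro i m him hmN
    have h1 : m = i + (m - i) := by omega
    have h2 := pow_growth i (m - i)
    rw [← h1] at h2
    have h3 : q ^ (m - i) ≤ q ^ N := pow_le_pow_right₀ hq1 (by omega)
    exact h2.trans (mul_le_mul_of_nonneg_right h3 (norm_nonneg _))
  -- fl converges
  obtain ⟨z₀, hz₀S, hz₀⟩ := hScompact.exists_isMinOn ⟨x 0, hmemS 0⟩ hf.continuous.continuousOn
  have hflb : ∀ k, f z₀ ≤ fl k := fun k => ((isMinOn_iff.mp hz₀) (x k) (hmemS k)).trans (hfk_le_fl k)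
  have hbdd : BddBelow (Set.range fl) := ⟨f z₀, by rintro _ ⟨k, rfl⟩; exact hflb k⟩
  have hFlim : Filter.Tendsto fl Filter.atTop (nhds (⨅ k, fl k)) := tendsto_atTop_ciInf hant hbdd
  set Flim : ℝ := ⨅ k, fl k with hFdef
  -- window estimate
  have window : ∀ k, ∃ i, k ≤ i ∧ i ≤ k + N ∧ cc * ‖g (x i)‖ ^ 2 ≤ fl k - fl (k + N + 1) := by
    intro k
    obtain ⟨j₀, hj₀mem, hj₀⟩ := Finset.exists_mem_eq_sup'
      (Finset.nonempty_range_add_one (n := min (k + N + 1) N)) (fun j => f (x (k + N + 1 - j)))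
    rw [Finset.mem_range] at hj₀mem
    refine ⟨k + N - j₀, by omega, by omega, ?_⟩
    have hidx : k + N + 1 - j₀ = (k + N - j₀) + 1 := by omega
    have h1 : fl (k + N + 1) = f (x ((k + N - j₀) + 1)) := by
      rw [hfl (k + N + 1), hj₀, hidx]
    have h2 := keydec (k + N - j₀)
    have h3 : fl (k + N - j₀) ≤ fl k := hant (by omega)
    linarith [h1 ▸ h2]
  -- gradient norms tend to zero
  have gsq : Filter.Tendsto (fun k => ‖g (x (k + N))‖ ^ 2) Filter.atTop (nhds 0) := by
    have hub : ∀ k, ‖g (x (k + N))‖ ^ 2 ≤ (q ^ N) ^ 2 / cc * (fl k - fl (k + N + 1)) := by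
      intro k
      obtain ⟨i, hik, hiN, hkey⟩ := window k
      have hgrow := growthN i (k + N) (by omega) (by omega)
      have h1 : ‖g (x (k + N))‖ ^ 2 ≤ (q ^ N) ^ 2 * ‖g (x i)‖ ^ 2 := by
        have h := mul_self_le_mul_self (norm_nonneg (g (x (k + N)))) hgrow
        calc ‖g (x (k + N))‖ ^ 2 = ‖g (x (k + N))‖ * ‖g (x (k + N))‖ := by ring
          _ ≤ (q ^ N * ‖g (x i)‖) * (q ^ N * ‖g (x i)‖) := h
          _ = (q ^ N) ^ 2 * ‖g (x i)‖ ^ 2 := by ring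
      have h2 : ‖g (x i)‖ ^ 2 ≤ (fl k - fl (k + N + 1)) / cc := by
        rw [le_div_iff₀ hcc0]
        linarith [hkey]
      calc ‖g (x (k + N))‖ ^ 2 ≤ (q ^ N) ^ 2 * ‖g (x i)‖ ^ 2 := h1
        _ ≤ (q ^ N) ^ 2 * ((fl k - fl (k + N + 1)) / cc) :=
            mul_le_mul_of_nonneg_left h2 (sq_nonneg _)
        _ = (q ^ N) ^ 2 / cc * (fl k - fl (k + N + 1)) := by ring
    have hrhs : Filter.Tendsto (fun k => (q ^ N) ^ 2 / cc * (fl k - fl (k + N + 1)))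
        Filter.atTop (nhds ((q ^ N) ^ 2 / cc * (Flim - Flim))) := by
      refine Filter.Tendsto.const_mul _ (Filter.Tendsto.sub hFlim ?_)
      exact hFlim.comp (Filter.tendsto_add_atTop_nat (N + 1))
    rw [sub_self, mul_zero] at hrhs
    exact squeeze_zero (fun k => sq_nonneg _) hub hrhs
  have gnorm : Filter.Tendsto (fun k => ‖g (x k)‖) Filter.atTop (nhds 0) := by
    have h1 : Filter.Tendsto (fun k => ‖g (x k)‖ ^ 2) Filter.atTop (nhds 0) := by
      rw [← Filter.tendsto_add_atTop_iff_nat N]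
      exact gsq
    have h2 : Filter.Tendsto (fun k => Real.sqrt (‖g (x k)‖ ^ 2)) Filter.atTop
        (nhds (Real.sqrt 0)) := (Real.continuous_sqrt.tendsto 0).comp h1
    rw [Real.sqrt_zero] at h2
    exact h2.congr fun k => Real.sqrt_sq (norm_nonneg _)
  -- conclude at a cluster point
  intro xstar hcluster
  obtain ⟨ψ, hψmono, hψtend⟩ := TopologicalSpace.FirstCountableTopology.tendsto_subseq hcluster
  have hxstarS : xstar ∈ S :=
    hSclosed.mem_of_tendsto hψtend (Filter.Eventually.of_forall fun i => hmemS (ψ i))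
  have hbound : ∀ i, ‖g xstar‖ ≤ L * ‖xstar - x (ψ i)‖ + ‖g (x (ψ i))‖ := by
    intro i
    have h1 : ‖g xstar - g (x (ψ i))‖ ≤ L * ‖xstar - x (ψ i)‖ :=
      hLip xstar (hSC hxstarS) (x (ψ i)) (hSC (hmemS _))
    have h2 : ‖g xstar‖ - ‖g (x (ψ i))‖ ≤ ‖g xstar - g (x (ψ i))‖ := norm_sub_norm_le _ _
    linarith
  have hrhs : Filter.Tendsto (fun i => L * ‖xstar - x (ψ i)‖ + ‖g (x (ψ i))‖)
      Filter.atTop (nhds (L * ‖xstar - xstar‖ + 0)) := by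
    refine Filter.Tendsto.add (Filter.Tendsto.const_mul _ ?_) ?_
    · exact (Filter.Tendsto.sub tendsto_const_nhds hψtend).norm
    · exact gnorm.comp (hψmono.tendsto_atTop)
  rw [sub_self, norm_zero, mul_zero, zero_add] at hrhs
  have hfin : ‖g xstar‖ ≤ 0 := ge_of_tendsto hrhs (Filter.Eventually.of_forall hbound)
  exact norm_le_zero_iff.mp hfin
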